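/- Define h(p,q) = d_B(1-q ‖ p) / (-log p) for p,q ∈ (0,1), where d_B(a‖b) = a·log(a/b) + (1-a)·log((1-a)/(1-b)) is the binary KL divergence. Then h(p,q) tends to 1 as (p,q) → (0,0). -/

import Mathlib

open Filter Set Real Topology

/-- Binary KL divergence `d_B(a‖b)` with base-2 logarithms. -/
noncomputable def binKL (a b : ℝ) : ℝ :=
  a * Real.logb 2 (a / b) + (1 - a) * Real.logb 2 ((1 - a) / (1 - b))

/-- `h(p,q) = d_B(1-q ‖ p) / (-log p)` tends to `1` as `(p,q) → (0,0)`
within `(0,1) × (0,1)`. -/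
theorem stmt0 :
    Filter.Tendsto
      (fun pq : ℝ × ℝ => binKL (1 - pq.2) pq.1 / (-Real.logb 2 pq.1))
      (nhdsWithin ((0 : ℝ), (0 : ℝ)) (Set.Ioo (0:ℝ) 1 ×ˢ Set.Ioo (0:ℝ) 1))
      (nhds 1) := by
  set F := nhdsWithin ((0 : ℝ), (0 : ℝ)) (Set.Ioo (0:ℝ) 1 ×ˢ Set.Ioo (0:ℝ) 1) with hF
  set g : ℝ × ℝ → ℝ := fun pq =>
    (1 - pq.2) * Real.logb 2 (1 - pq.2) + pq.2 * Real.logb 2 pq.2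
      - pq.2 * Real.logb 2 (1 - pq.1) with hg
  have hFprod : F = nhdsWithin (0:ℝ) (Ioo 0 1) ×ˢ nhdsWithin (0:ℝ) (Ioo 0 1) := by
    rw [hF, nhdsWithin_prod_eq]
  have hfst : Tendsto (fun pq : ℝ × ℝ => pq.1) F (nhdsWithin (0:ℝ) (Ioo 0 1)) := by
    rw [hFprod]; exact tendsto_fst
  have hsnd : Tendsto (fun pq : ℝ × ℝ => pq.2) F (nhdsWithin (0:ℝ) (Ioo 0 1)) := by
    rw [hFprod]; exact tendsto_snd
  -- denominator tends to atTop
  have hden : Tendsto (fun pq : ℝ × ℝ => -Real.logb 2 pq.1) F atTop := by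
    have h1 : Tendsto (Real.logb 2) (nhdsWithin (0:ℝ) (Ioo 0 1)) atBot := by
      have := Real.tendsto_log_nhdsGT_zero
      have h2 : Tendsto (fun x => Real.log x / Real.log 2) (𝓝[>] (0:ℝ)) atBot :=
        this.atBot_div_const (by positivity)
      have h3 : Tendsto (Real.logb 2) (𝓝[>] (0:ℝ)) atBot := by
        exact h2
      exact h3.mono_left (nhdsWithin_mono _ fun x hx => hx.1)
    exact (tendsto_neg_atBot_atTop.comp (h1.comp hfst))
  -- numerator g tends to 0
  have hgto : Tendsto g F (nhds 0) := by
    have hq0 : Tendsto (fun pq : ℝ × ℝ => pq.2) F (nhds 0) :=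
      hsnd.mono_right nhdsWithin_le_nhds
    have hp0 : Tendsto (fun pq : ℝ × ℝ => pq.1) F (nhds 0) :=
      hfst.mono_right nhdsWithin_le_nhds
    have t1 : Tendsto (fun pq : ℝ × ℝ => (1 - pq.2) * Real.logb 2 (1 - pq.2)) F (nhds 0) := by
      have : Tendsto (fun pq : ℝ × ℝ => (1 - pq.2)) F (nhds 1) := by
        simpa using tendsto_const_nhds.sub hq0
      have hc : ContinuousAt (fun x : ℝ => x * Real.logb 2 x) 1 := by
        have : Continuous fun x : ℝ => x * (Real.log x / Real.log 2) := by
          simpa [mul_div_assoc] using Real.continuous_mul_log.div_const (Real.log 2)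
        simpa [Real.logb] using this.continuousAt (x := 1)
      simpa [Real.logb, Function.comp_def] using (hc.tendsto.comp this)
    have t2 : Tendsto (fun pq : ℝ × ℝ => pq.2 * Real.logb 2 pq.2) F (nhds 0) := by
      have hc : Continuous fun x : ℝ => x * (Real.log x / Real.log 2) := by
        simpa [mul_div_assoc] using Real.continuous_mul_log.div_const (Real.log 2)
      have := (hc.continuousAt (x := 0)).tendsto.comp hq0
      simpa [Real.logb, Function.comp_def] using this
    have t3 : Tendsto (fun pq : ℝ × ℝ => pq.2 * Real.logb 2 (1 - pq.1)) F (nhds 0) := by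
      have hlog : Tendsto (fun pq : ℝ × ℝ => Real.logb 2 (1 - pq.1)) F (nhds 0) := by
        have hc1 : ContinuousAt (fun x : ℝ => 1 - x) (0:ℝ) := by fun_prop
        have hc2 : ContinuousAt Real.log ((fun x : ℝ => 1 - x) 0) :=
          Real.continuousAt_log (by norm_num)
        have hcont : ContinuousAt (fun x : ℝ => Real.logb 2 (1 - x)) 0 := by
          simpa [Real.logb, Function.comp_def] using (hc2.comp hc1).div_const (Real.log 2)
        simpa [Function.comp_def] using hcont.tendsto.comp hp0
      simpa using hq0.mul hlog
    have := (t1.add t2).sub t3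
    simpa using this
  have hrat : Tendsto (fun pq : ℝ × ℝ => g pq / (-Real.logb 2 pq.1)) F (nhds 0) :=
    hgto.div_atTop hden
  have hmain : Tendsto (fun pq : ℝ × ℝ => (1 - pq.2) + g pq / (-Real.logb 2 pq.1)) F (nhds 1) := by
    have h1 : Tendsto (fun pq : ℝ × ℝ => (1 - pq.2)) F (nhds 1) := by
      simpa using tendsto_const_nhds.sub (hsnd.mono_right nhdsWithin_le_nhds)
    simpa using h1.add hrat
  refine hmain.congr' ?_
  filter_upwards [self_mem_nhdsWithin] with pq hpq
  obtain ⟨p, q⟩ := pq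
  obtain ⟨⟨hp0, hp1⟩, hq0, hq1⟩ := hpq
  simp only at hp0 hp1 hq0 hq1 ⊢
  have hlogp : Real.logb 2 p < 0 := Real.logb_neg (by norm_num) hp0 hp1
  have hlogp' : -Real.logb 2 p ≠ 0 := by linarith
  have h1q : (0:ℝ) < 1 - q := by linarith
  have h1p : (0:ℝ) < 1 - p := by linarith
  have e1 : Real.logb 2 ((1 - q) / p) = Real.logb 2 (1 - q) - Real.logb 2 p :=
    Real.logb_div (ne_of_gt h1q) (ne_of_gt hp0)
  have e2 : Real.logb 2 ((1 - (1 - q)) / (1 - p)) = Real.logb 2 q - Real.logb 2 (1 - p) := by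
    rw [show (1 - (1 - q)) = q by ring, Real.logb_div (ne_of_gt hq0) (ne_of_gt h1p)]
  rw [binKL, e1, e2, hg]
  beta_reduce
  rw [eq_div_iff hlogp', add_mul, div_mul_cancel₀ _ hlogp']
  ring
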